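/- arXiv:2207.09203 — 6 statements merged into one kernel-verified Lean document; each statement's English description precedes it below -/
import Mathlib

section
/- Every separable inner quasidiagonal C*-algebra is an MF algebra. -/
open scoped Matrix.Norms.L2Operator ComplexOrder
open Matrix Filter TopologicalSpace

noncomputable section

/-- `n × n` complex matrices endowed with the ℓ²-operator norm. -/
abbrev MatC (n : ℕ) : Type := Matrix (Fin n) (Fin n) ℂ

/-- A map into matrices is `*`-linear if it is `ℂ`-linear and star-preserving. -/
def IsStarLinear {A : Type*} [AddCommGroup A] [Module ℂ A] [Star A] {n : ℕ}
    (φ : A → MatC n) : Prop :=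
  IsLinearMap ℂ φ ∧ ∀ a, φ (star a) = star (φ a)

/-- The normalized trace `trₙ` on `n × n` matrices. -/
def trn {n : ℕ} (α : MatC n) : ℂ := Matrix.trace α / (n : ℂ)

/-- The 2-norm `‖α‖_{2,tr} = trₙ(α*α)^{1/2}` induced by the normalized trace. -/
def l2tr {n : ℕ} (α : MatC n) : ℝ := Real.sqrt (trn (star α * α)).re

/-- A C*-algebra `A` is MF: for every finite `F ⊆ A` and `ε > 0` there are `n ≥ 1` and a
`*`-linear map `φ : A → Mₙ` which is `ε`-almost multiplicative and `ε`-almost norm-preserving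
on `F`. -/
def IsMFAlgebra (A : Type*) [NonUnitalCStarAlgebra A] : Prop :=
  ∀ (F : Finset A) (ε : ℝ), 0 < ε → ∃ n : ℕ, 0 < n ∧ ∃ φ : A → MatC n,
    IsStarLinear φ ∧
    (∀ a ∈ F, ∀ a' ∈ F, ‖φ (a * a') - φ a * φ a'‖ < ε) ∧
    (∀ a ∈ F, ‖a‖ - ε < ‖φ a‖)

/-- A trace: a positive linear functional satisfying `τ(ab) = τ(ba)`. -/
def IsTrace {A : Type*} [NonUnitalRing A] [Star A] [Module ℂ A] (τ : A →ₗ[ℂ] ℂ) : Prop :=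
  (∀ a, 0 ≤ τ (star a * a)) ∧ ∀ a b, τ (a * b) = τ (b * a)

/-- An MF trace. -/
def IsMFTrace {A : Type*} [NonUnitalRing A] [Star A] [Module ℂ A] (τ : A →ₗ[ℂ] ℂ) : Prop :=
  ∀ (F : Finset A) (ε : ℝ), 0 < ε → ∃ n : ℕ, 0 < n ∧ ∃ φ : A → MatC n,
    IsStarLinear φ ∧
    (∀ a ∈ F, ∀ a' ∈ F, ‖φ (a * a') - φ a * φ a'‖ < ε) ∧
    (∀ a ∈ F, ‖τ a - trn (φ a)‖ < ε)

/-- An MA (matricially amenable) trace. -/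
def IsMATrace {A : Type*} [NonUnitalRing A] [Star A] [Module ℂ A] (τ : A →ₗ[ℂ] ℂ) : Prop :=
  ∀ (F : Finset A) (ε : ℝ), 0 < ε → ∃ n : ℕ, 0 < n ∧ ∃ φ : A → MatC n,
    IsStarLinear φ ∧
    (∀ a ∈ F, ∀ a' ∈ F, l2tr (φ (a * a') - φ a * φ a') < ε) ∧
    (∀ a ∈ F, ‖τ a - trn (φ a)‖ < ε)

/-- An MF set of operators on a Hilbert space. -/
def IsMFSet {H : Type*} [NormedAddCommGroup H] [InnerProductSpace ℂ H] [CompleteSpace H]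
    (M : Set (H →L[ℂ] H)) : Prop :=
  ∀ (F : Finset (H →L[ℂ] H)), ↑F ⊆ M → ∀ (H₀ : Finset H) (ε : ℝ), 0 < ε →
    ∃ P : H →L[ℂ] H, IsSelfAdjoint P ∧ P * P = P ∧
      (∀ T ∈ F, ‖P * T - T * P‖ < ε) ∧ ∀ x ∈ H₀, ‖x‖ - ε < ‖P x‖

/-- A C*-algebra is inner ℂ quasidiagonal: for every finite set and `ε > 0` there are a
representation `π` on a Hilbert space and a finite-rank projection `P` in the double
commutant `π(A)''` almost commuting with and almost norm-preserving the given elements. -/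
def IsInnerQuasidiagonal (A : Type*) [NonUnitalCStarAlgebra A] : Prop :=
  ∀ (F : Finset A) (ε : ℝ), 0 < ε →
    ∃ (H : Type) (_ : NormedAddCommGroup H) (_ : InnerProductSpace ℂ H) (_ : CompleteSpace H)
      (π : A →⋆ₙₐ[ℂ] (H →L[ℂ] H)) (P : H →L[ℂ] H),
      IsSelfAdjoint P ∧ P * P = P ∧ FiniteDimensional ℂ (LinearMap.range (P : H →ₗ[ℂ] H)) ∧
      P ∈ Set.centralizer (Set.centralizer (Set.range π)) ∧
      ∀ x ∈ F, ‖P * π x - π x * P‖ < ε ∧ ‖x‖ - ε < ‖P * π x * P‖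

set_option maxHeartbeats 1600000

/-- Every separable inner ℂ quasidiagonal C*-algebra is an MF algebra. -/
theorem innerQuasidiagonal_isMFAlgebra (A : Type*) [NonUnitalCStarAlgebra A]
    [SeparableSpace A] (h : IsInnerQuasidiagonal A) : IsMFAlgebra A := by
  intro F ε hε
  classical
  set C : ℝ := 1 + ↑(F.sup fun a => ‖a‖₊) with hCdef
  have hC1 : (1 : ℝ) ≤ C := le_add_of_nonneg_right (by positivity)
  have hC0 : (0 : ℝ) < C := lt_of_lt_of_le one_pos hC1
  have haC : ∀ a ∈ F, ‖a‖ ≤ C - 1 := by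
    intro a ha
    have h1 : ‖a‖₊ ≤ F.sup fun a => ‖a‖₊ := Finset.le_sup ha
    have h2 : (‖a‖₊ : ℝ) ≤ ((F.sup fun a => ‖a‖₊ : NNReal) : ℝ) := by exact_mod_cast h1
    simp only [coe_nnnorm] at h2
    simp [hCdef]
    linarith
  set ε' := ε / C with hε'def
  have hε' : (0 : ℝ) < ε' := div_pos hε hC0
  have hε'ε : ε' ≤ ε := div_le_self hε.le hC1
  have hCε' : C * ε' = ε := by
    rw [hε'def, mul_div_assoc']
    exact mul_div_cancel_left₀ ε hC0.ne'
  obtain ⟨H, _, _, _, π, P, hPsa, hPidem, hfd, -, hF⟩ := h F ε' hε'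
  -- basic facts about P
  have hPP : ∀ x : H, P (P x) = P x := by
    intro x
    rw [← ContinuousLinearMap.mul_apply, hPidem]
  have hPadjeq : ContinuousLinearMap.adjoint P = P := hPsa
  have hPadj : ∀ x y : H, inner ℂ (P x) y = (inner ℂ x (P y) : ℂ) := by
    intro x y
    rw [← hPadjeq, ContinuousLinearMap.adjoint_inner_left, hPadjeq]
  have hPnorm : ∀ x : H, ‖P x‖ ≤ ‖x‖ := by
    intro x
    rcases eq_or_lt_of_le (norm_nonneg (P x)) with h0 | h0
    · rw [← h0]; exact norm_nonneg x
    · have h1 : ‖P x‖ * ‖P x‖ = RCLike.re (inner ℂ (P x) (P x) : ℂ) :=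
        (inner_self_eq_norm_mul_norm (P x)).symm
      have h2 : (inner ℂ (P x) (P x) : ℂ) = inner ℂ x (P x) := by
        rw [hPadj x (P x), hPP]
      have h3 : RCLike.re (inner ℂ x (P x) : ℂ) ≤ ‖x‖ * ‖P x‖ := by
        calc RCLike.re (inner ℂ x (P x) : ℂ) ≤ ‖(inner ℂ x (P x) : ℂ)‖ :=
              RCLike.re_le_norm _
          _ ≤ ‖x‖ * ‖P x‖ := norm_inner_le_norm x (P x)
      have h4 : ‖P x‖ * ‖P x‖ ≤ ‖x‖ * ‖P x‖ := by rw [h1, h2]; exact h3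
      exact le_of_mul_le_mul_right h4 h0
  set V : Submodule ℂ H := LinearMap.range (P : H →ₗ[ℂ] H) with hV
  haveI : FiniteDimensional ℂ V := hfd
  have hPfix : ∀ x : H, x ∈ V → P x = x := by
    rintro x ⟨y, rfl⟩
    exact hPP y
  by_cases hn : Module.finrank ℂ V = 0
  · -- trivial case : P = 0
    have hVbot : V = ⊥ := Submodule.finrank_eq_zero.mp hn
    have hP0 : P = 0 := by
      ext x
      have : P x ∈ V := LinearMap.mem_range_self _ x
      rw [hVbot, Submodule.mem_bot] at this
      simpa using this
    refine ⟨1, one_pos, fun _ => 0, ⟨⟨fun _ _ => by simp, fun _ _ => by simp⟩,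
      fun _ => by simp⟩, fun a _ a' _ => by simpa using hε, fun a ha => ?_⟩
    have := (hF a ha).2
    rw [hP0] at this
    simp only [zero_mul, mul_zero, norm_zero] at this
    simp only [norm_zero]
    linarith
  · -- main case
    set n := Module.finrank ℂ V with hndef
    have hnpos : 0 < n := Nat.pos_of_ne_zero hn
    set b : OrthonormalBasis (Fin n) ℂ V := stdOrthonormalBasis ℂ V with hb
    set e : V ≃ₗᵢ[ℂ] EuclideanSpace ℂ (Fin n) := b.repr with he
    set q : H →L[ℂ] V := P.codRestrict V (fun x => LinearMap.mem_range_self _ x) with hq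
    set ι : V →L[ℂ] H := V.subtypeL with hι
    set T : A → (V →L[ℂ] V) := fun a => (q.comp (π a)).comp ι with hT
    set EL : V →L[ℂ] EuclideanSpace ℂ (Fin n) :=
      e.toContinuousLinearEquiv.toContinuousLinearMap with hEL
    set ELs : EuclideanSpace ℂ (Fin n) →L[ℂ] V :=
      e.toContinuousLinearEquiv.symm.toContinuousLinearMap with hELs
    set S : A → (EuclideanSpace ℂ (Fin n) →L[ℂ] EuclideanSpace ℂ (Fin n)) :=
      fun a => (EL.comp (T a)).comp ELs with hS
    have hELapply : ∀ v : V, EL v = e v := fun _ => rfl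
    have hELsapply : ∀ x, ELs x = e.symm x := fun _ => rfl
    have hSapply : ∀ a x, S a x = e (T a (e.symm x)) := fun _ _ => rfl
    have hTapply : ∀ a (v : V), ((T a v : V) : H) = P (π a (v : H)) := fun _ _ => rfl
    have hqnorm : ∀ x : H, ‖q x‖ = ‖P x‖ := fun _ => rfl
    -- conjugation preserves norms
    have hconj : ∀ W : V →L[ℂ] V, ‖(EL.comp W).comp ELs‖ = ‖W‖ := by
      intro W
      refine le_antisymm ?_ ?_
      · refine ContinuousLinearMap.opNorm_le_bound _ (norm_nonneg W) fun x => ?_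
        have : ((EL.comp W).comp ELs) x = e (W (e.symm x)) := rfl
        rw [this, e.norm_map]
        calc ‖W (e.symm x)‖ ≤ ‖W‖ * ‖e.symm x‖ := W.le_opNorm _
          _ = ‖W‖ * ‖x‖ := by rw [e.symm.norm_map]
      · refine ContinuousLinearMap.opNorm_le_bound _ (norm_nonneg _) fun v => ?_
        have h1 : W v = e.symm (((EL.comp W).comp ELs) (e v)) := by
          show W v = e.symm (e (W (e.symm (e v))))
          rw [e.symm_apply_apply, e.symm_apply_apply]
        rw [h1, e.symm.norm_map]
        calc ‖((EL.comp W).comp ELs) (e v)‖ ≤ ‖(EL.comp W).comp ELs‖ * ‖e v‖ :=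
              ContinuousLinearMap.le_opNorm _ _
          _ = ‖(EL.comp W).comp ELs‖ * ‖v‖ := by rw [e.norm_map]
    set φ : A → MatC n := fun a => (Matrix.toEuclideanCLM (𝕜 := ℂ) (n := Fin n)).symm (S a)
      with hφ
    have hφnorm : ∀ X : EuclideanSpace ℂ (Fin n) →L[ℂ] EuclideanSpace ℂ (Fin n),
        ‖(Matrix.toEuclideanCLM (𝕜 := ℂ) (n := Fin n)).symm X‖ = ‖X‖ := by
      intro X
      rw [Matrix.cstar_norm_def, StarAlgEquiv.apply_symm_apply]
    -- S is conjugation-compatible with multiplication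
    have hSmul : ∀ a a', S a * S a' = (EL.comp ((T a) * (T a'))).comp ELs := by
      intro a a'
      refine ContinuousLinearMap.ext fun x => ?_
      show S a (S a' x) = e ((T a) ((T a') (e.symm x)))
      rw [hSapply, hSapply, e.symm_apply_apply]
    have hSsub : ∀ a a', S (a * a') - S a * S a' =
        (EL.comp (T (a * a') - T a * T a')).comp ELs := by
      intro a a'
      rw [hSmul]
      have h0 : S (a * a') = (EL.comp (T (a * a'))).comp ELs := rfl
      rw [h0, ← ContinuousLinearMap.sub_comp, ← ContinuousLinearMap.comp_sub]
    -- key pointwise identity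
    have hTmul : ∀ a a' : A, ∀ v : V,
        (T (a * a') - T a * T a') v = q (π a ((π a' * P - P * π a') (v : H))) := by
      intro a a' v
      have hPv : P (v : H) = (v : H) := hPfix _ v.2
      apply Subtype.ext
      show ((T (a * a') v : V) : H) - ((T a (T a' v) : V) : H) =
        P (π a ((π a' * P - P * π a') (v : H)))
      rw [hTapply, hTapply, hTapply]
      have h1 : π (a * a') (v : H) = π a (π a' (v : H)) := by
        rw [_root_.map_mul]; rfl
      rw [h1]
      have h2 : ((π a' * P - P * π a') (v : H)) = π a' (v : H) - P (π a' (v : H)) := by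
        simp [ContinuousLinearMap.sub_apply, ContinuousLinearMap.mul_apply, hPv]
      rw [h2, _root_.map_sub, _root_.map_sub]
    have hTbound : ∀ a a' : A,
        ‖T (a * a') - T a * T a'‖ ≤ ‖a‖ * ‖P * π a' - π a' * P‖ := by
      intro a a'
      refine ContinuousLinearMap.opNorm_le_bound _ (by positivity) fun v => ?_
      rw [hTmul]
      have hcomm : ‖π a' * P - P * π a'‖ = ‖P * π a' - π a' * P‖ := norm_sub_rev _ _
      calc ‖q (π a ((π a' * P - P * π a') (v : H)))‖
          = ‖P (π a ((π a' * P - P * π a') (v : H)))‖ := hqnorm _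
        _ ≤ ‖π a ((π a' * P - P * π a') (v : H))‖ := hPnorm _
        _ ≤ ‖π a‖ * ‖(π a' * P - P * π a') (v : H)‖ := (π a).le_opNorm _
        _ ≤ ‖π a‖ * (‖π a' * P - P * π a'‖ * ‖(v : H)‖) := by
            gcongr
            exact ContinuousLinearMap.le_opNorm _ _
        _ = ‖π a‖ * ‖P * π a' - π a' * P‖ * ‖v‖ := by
            rw [hcomm, Submodule.norm_coe]; ring
        _ ≤ ‖a‖ * ‖P * π a' - π a' * P‖ * ‖v‖ := by
            gcongr
            exact NonUnitalStarAlgHom.norm_apply_le π a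
    -- lower bound on norms
    have hTlow : ∀ a : A, ‖P * π a * P‖ ≤ ‖T a‖ := by
      intro a
      refine ContinuousLinearMap.opNorm_le_bound _ (norm_nonneg (T a)) fun x => ?_
      have h1 : (P * π a * P) x = ((T a (q x) : V) : H) := by
        rw [hTapply]
        rfl
      calc ‖(P * π a * P) x‖ = ‖T a (q x)‖ := by rw [h1, Submodule.norm_coe]
        _ ≤ ‖T a‖ * ‖q x‖ := ContinuousLinearMap.le_opNorm _ _
        _ = ‖T a‖ * ‖P x‖ := by rw [hqnorm]
        _ ≤ ‖T a‖ * ‖x‖ := by gcongr; exact hPnorm x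
    refine ⟨n, hnpos, φ, ⟨⟨?_, ?_⟩, ?_⟩, ?_, ?_⟩
    · -- additivity
      intro a a'
      have hTadd : T (a + a') = T a + T a' := by
        ext v
        simp only [ContinuousLinearMap.add_apply, Submodule.coe_add]
        rw [hTapply, hTapply, hTapply, _root_.map_add, ContinuousLinearMap.add_apply, _root_.map_add]
      have hSadd : S (a + a') = S a + S a' := by
        refine ContinuousLinearMap.ext fun x => ?_
        rw [hSapply, hTadd, ContinuousLinearMap.add_apply, _root_.map_add,
          ContinuousLinearMap.add_apply, hSapply, hSapply]
      show (Matrix.toEuclideanCLM (𝕜 := ℂ) (n := Fin n)).symm (S (a + a')) =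
        (Matrix.toEuclideanCLM (𝕜 := ℂ) (n := Fin n)).symm (S a) +
        (Matrix.toEuclideanCLM (𝕜 := ℂ) (n := Fin n)).symm (S a')
      rw [hSadd, _root_.map_add]
    · -- smul
      intro c a
      have hTsmul : T (c • a) = c • T a := by
        ext v
        simp only [ContinuousLinearMap.smul_apply, Submodule.coe_smul]
        rw [hTapply, hTapply, _root_.map_smul, ContinuousLinearMap.smul_apply, _root_.map_smul]
      have hSsmul : S (c • a) = c • S a := by
        refine ContinuousLinearMap.ext fun x => ?_
        rw [hSapply, hTsmul, ContinuousLinearMap.smul_apply, _root_.map_smul,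
          ContinuousLinearMap.smul_apply, hSapply]
      show (Matrix.toEuclideanCLM (𝕜 := ℂ) (n := Fin n)).symm (S (c • a)) =
        c • (Matrix.toEuclideanCLM (𝕜 := ℂ) (n := Fin n)).symm (S a)
      rw [hSsmul, _root_.map_smul]
    · -- star
      intro a
      have hSstar : S (star a) = star (S a) := by
        rw [ContinuousLinearMap.star_eq_adjoint]
        rw [ContinuousLinearMap.eq_adjoint_iff]
        intro x y
        have hx := e.symm x
        have hPux : P ((e.symm x : V) : H) = ((e.symm x : V) : H) := hPfix _ (e.symm x).2
        have hPwy : P ((e.symm y : V) : H) = ((e.symm y : V) : H) := hPfix _ (e.symm y).2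
        have hL : (inner ℂ (S (star a) x) y : ℂ) =
            inner ℂ (((e.symm x : V) : H)) (π a ((e.symm y : V) : H)) := by
          rw [hSapply]
          have h1 : (inner ℂ (e (T (star a) (e.symm x))) y : ℂ) =
              inner ℂ (T (star a) (e.symm x)) (e.symm y) := by
            conv_lhs => rw [show y = e (e.symm y) from (e.apply_symm_apply y).symm]
            rw [e.inner_map_map]
          rw [h1, Submodule.coe_inner, hTapply]
          rw [hPadj, hPwy]
          have h2 : π (star a) = ContinuousLinearMap.adjoint (π a) := by
            rw [map_star, ContinuousLinearMap.star_eq_adjoint]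
          rw [h2, ContinuousLinearMap.adjoint_inner_left]
        have hR : (inner ℂ x (S a y) : ℂ) =
            inner ℂ (((e.symm x : V) : H)) (π a ((e.symm y : V) : H)) := by
          rw [hSapply]
          have h1 : (inner ℂ x (e (T a (e.symm y))) : ℂ) =
              inner ℂ (e.symm x) (T a (e.symm y)) := by
            conv_lhs => rw [show x = e (e.symm x) from (e.apply_symm_apply x).symm]
            rw [e.inner_map_map]
          rw [h1, Submodule.coe_inner, hTapply]
          rw [← hPadj, hPux]
        rw [hL, hR]
      simp only [hφ, hSstar]
      exact (Matrix.toEuclideanCLM (𝕜 := ℂ) (n := Fin n)).symm.map_star' _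
    · -- almost multiplicative
      intro a ha a' ha'
      have hcomm := (hF a' ha').1
      have h1 : φ (a * a') - φ a * φ a' =
          (Matrix.toEuclideanCLM (𝕜 := ℂ) (n := Fin n)).symm (S (a * a') - S a * S a') := by
        simp only [hφ, _root_.map_sub, _root_.map_mul]
      rw [h1, hφnorm, hSsub, hconj]
      calc ‖T (a * a') - T a * T a'‖ ≤ ‖a‖ * ‖P * π a' - π a' * P‖ := hTbound a a'
        _ ≤ (C - 1) * ε' := by
            apply mul_le_mul (haC a ha) hcomm.le (norm_nonneg _)
            linarith
        _ < C * ε' := by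
            apply mul_lt_mul_of_pos_right _ hε'
            linarith
        _ = ε := hCε'
    · -- almost isometric
      intro a ha
      have h2 := (hF a ha).2
      have h3 : ‖P * π a * P‖ ≤ ‖φ a‖ := by
        rw [hφ]
        simp only
        rw [hφnorm, hS]
        simp only
        rw [hconj]
        exact hTlow a
      linarith
end
end

section
/- Let A be a nonunital separable C*-algebra, τ a trace on A, and let τ̃ be the trace on the unitization A♯ of A defined by τ̃(a + λ1) = τ(a) + λ for a ∈ A, λ ∈ ℂ. Then τ is an MF trace on A if and only if τ̃ is an MF trace on A♯. -/
open scoped Matrix.Norms.L2Operator ComplexOrder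
open Matrix Filter TopologicalSpace

noncomputable section

/-- For a nonunital separable C*-algebra `A` with trace `τ`, and the canonical extension
`τ̃(a + λ1) = τ(a) + λ` to the unitization `A♯ = Unitization ℂ A`, the trace `τ` is MF
if and only if `τ̃` is MF. -/
theorem isMFTrace_unitization_iff (A : Type*) [NonUnitalCStarAlgebra A] [SeparableSpace A]
    (hnonunital : ¬ ∃ e : A, ∀ a : A, e * a = a ∧ a * e = a)
    (τ : A →ₗ[ℂ] ℂ) (hτ : IsTrace τ)
    (τt : Unitization ℂ A →ₗ[ℂ] ℂ) (hτt : ∀ z : Unitization ℂ A, τt z = τ z.snd + z.fst) :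
    IsMFTrace τ ↔ IsMFTrace τt := by
  have htrn1 : ∀ {n : ℕ}, 0 < n → ∀ c : ℂ, trn (c • (1 : MatC n)) = c := by
    intro n hn c
    simp only [trn, Matrix.trace_smul, Matrix.trace_one, smul_eq_mul]
    rw [Fintype.card_fin]
    have hn' : (n : ℂ) ≠ 0 := by exact_mod_cast hn.ne'
    field_simp
  classical
  constructor
  · intro h F ε hε
    obtain ⟨n, hn, φ, ⟨hφlin, hφstar⟩, hmul, htr⟩ :=
      h (F.image (fun z : Unitization ℂ A => z.snd)) ε hε
    refine ⟨n, hn, fun z => φ z.snd + z.fst • 1, ⟨⟨?_, ?_⟩, ?_⟩, ?_, ?_⟩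
    · intro z w
      simp only [Unitization.snd_add, Unitization.fst_add, hφlin.map_add, add_smul]
      abel
    · intro c z
      simp only [Unitization.snd_smul, Unitization.fst_smul, hφlin.map_smul, smul_add,
        smul_smul, smul_eq_mul]
    · intro z
      simp only [Unitization.snd_star, Unitization.fst_star, hφstar, star_add, star_smul,
        star_one]
    · intro z hz w hw
      have key : φ ((z * w).snd) + (z * w).fst • (1 : MatC n)
          - (φ z.snd + z.fst • 1) * (φ w.snd + w.fst • 1)
          = φ (z.snd * w.snd) - φ z.snd * φ w.snd := by
        simp only [Unitization.snd_mul, Unitization.fst_mul, hφlin.map_add, hφlin.map_smul,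
          add_mul, mul_add, smul_add, smul_mul_assoc, mul_smul_comm, one_mul, mul_one, smul_smul]
        rw [mul_comm w.fst z.fst]
        abel
      rw [key]
      exact hmul z.snd (Finset.mem_image_of_mem _ hz) w.snd (Finset.mem_image_of_mem _ hw)
    · intro z hz
      have : trn (φ z.snd + z.fst • (1 : MatC n)) = trn (φ z.snd) + z.fst := by
        simp only [trn, Matrix.trace_add]
        rw [add_div]
        congr 1
        simpa [trn] using htrn1 hn z.fst
      rw [this, hτt]
      have : τ z.snd + z.fst - (trn (φ z.snd) + z.fst) = τ z.snd - trn (φ z.snd) := by ring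
      rw [this]
      exact htr z.snd (Finset.mem_image_of_mem _ hz)
  · intro h F ε hε
    obtain ⟨n, hn, ψ, ⟨hψlin, hψstar⟩, hmul, htr⟩ :=
      h (F.image (Unitization.inr : A → Unitization ℂ A)) ε hε
    refine ⟨n, hn, fun a => ψ (Unitization.inr a), ⟨⟨?_, ?_⟩, ?_⟩, ?_, ?_⟩
    · intro a b; rw [Unitization.inr_add, hψlin.map_add]
    · intro c a; rw [Unitization.inr_smul, hψlin.map_smul]
    · intro a; dsimp only; rw [Unitization.inr_star, hψstar]
    · intro a ha b hb
      dsimp only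
      rw [Unitization.inr_mul]
      exact hmul _ (Finset.mem_image_of_mem _ ha) _ (Finset.mem_image_of_mem _ hb)
    · intro a ha
      have : τ a = τt (Unitization.inr a) := by
        rw [hτt]; simp
      rw [this]
      exact htr _ (Finset.mem_image_of_mem _ ha)
end
end

section
/- Let A be a nonunital separable C*-algebra, τ a trace on A, and let τ̃ be the trace on the unitization A♯ of A defined by τ̃(a + λ1) = τ(a) + λ for a ∈ A, λ ∈ ℂ. Then τ is an MA trace on A if and only if τ̃ is an MA trace on A♯. -/
open scoped Matrix.Norms.L2Operator ComplexOrder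
open Matrix Filter TopologicalSpace

noncomputable section

/-- For a nonunital separable C*-algebra `A` with trace `τ`, and the canonical extension
`τ̃(a + λ1) = τ(a) + λ` to the unitization `A♯ = Unitization ℂ A`, the trace `τ` is MA
if and only if `τ̃` is MA. -/
theorem isMATrace_unitization_iff (A : Type*) [NonUnitalCStarAlgebra A] [SeparableSpace A]
    (hnonunital : ¬ ∃ e : A, ∀ a : A, e * a = a ∧ a * e = a)
    (τ : A →ₗ[ℂ] ℂ) (hτ : IsTrace τ)
    (τt : Unitization ℂ A →ₗ[ℂ] ℂ) (hτt : ∀ z : Unitization ℂ A, τt z = τ z.snd + z.fst) :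
    IsMATrace τ ↔ IsMATrace τt := by
  classical
  constructor
  · -- forward: extend φ to the unitization by φ̃(z) = φ(z.snd) + z.fst • 1
    intro h F ε hε
    obtain ⟨n, hn, φ, ⟨hlin, hstar⟩, hmul, htr⟩ := h (F.image (fun z : Unitization ℂ A => z.snd)) ε hε
    have hnC : (n : ℂ) ≠ 0 := Nat.cast_ne_zero.mpr hn.ne'
    refine ⟨n, hn, fun z => φ z.snd + z.fst • 1, ⟨⟨?_, ?_⟩, ?_⟩, ?_, ?_⟩
    · intro z w
      simp only [Unitization.snd_add, Unitization.fst_add, hlin.map_add, add_smul]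
      abel
    · intro c z
      simp only [Unitization.snd_smul, Unitization.fst_smul, hlin.map_smul, smul_add,
        smul_smul, smul_eq_mul]
    · intro z
      simp only [Unitization.snd_star, Unitization.fst_star, hstar, star_add, star_smul,
        star_one, RCLike.star_def]
    · intro z hz w hw
      have key : (φ (z * w).snd + (z * w).fst • 1)
          - ((φ z.snd + z.fst • 1) * (φ w.snd + w.fst • 1))
          = φ (z.snd * w.snd) - φ z.snd * φ w.snd := by
        simp only [Unitization.snd_mul, Unitization.fst_mul, hlin.map_add, hlin.map_smul,
          mul_add, add_mul, smul_mul_assoc, Matrix.mul_smul, one_mul, mul_one, smul_smul]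
        abel
      rw [key]
      exact hmul _ (Finset.mem_image_of_mem _ hz) _ (Finset.mem_image_of_mem _ hw)
    · intro z hz
      have htrn : trn ((fun z : Unitization ℂ A => φ z.snd + z.fst • 1) z)
          = trn (φ z.snd) + z.fst := by
        simp only [trn, Matrix.trace_add, Matrix.trace_smul, Matrix.trace_one,
          Fintype.card_fin, add_div, smul_eq_mul]
        rw [mul_div_assoc, div_self hnC, mul_one]
      rw [htrn, hτt]
      have : τ z.snd + z.fst - (trn (φ z.snd) + z.fst) = τ z.snd - trn (φ z.snd) := by ring
      rw [this]
      exact htr _ (Finset.mem_image_of_mem _ hz)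
  · -- backward: restrict ψ along the inclusion A → Unitization ℂ A
    intro h F ε hε
    obtain ⟨n, hn, ψ, ⟨hlin, hstar⟩, hmul, htr⟩ :=
      h (F.image (fun a : A => (a : Unitization ℂ A))) ε hε
    refine ⟨n, hn, fun a => ψ (a : Unitization ℂ A), ⟨⟨?_, ?_⟩, ?_⟩, ?_, ?_⟩
    · intro a b
      rw [Unitization.inr_add, hlin.map_add]
    · intro c a
      rw [Unitization.inr_smul, hlin.map_smul]
    · intro a
      show ψ ((star a : A) : Unitization ℂ A) = star (ψ (a : Unitization ℂ A))
      rw [Unitization.inr_star, hstar]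
    · intro a ha b hb
      have : ((a * b : A) : Unitization ℂ A) = (a : Unitization ℂ A) * (b : Unitization ℂ A) :=
        Unitization.inr_mul ℂ a b
      show l2tr (ψ ((a * b : A) : Unitization ℂ A) - ψ (a : Unitization ℂ A) * ψ (b : Unitization ℂ A)) < ε
      rw [this]
      exact hmul _ (Finset.mem_image_of_mem _ ha) _ (Finset.mem_image_of_mem _ hb)
    · intro a ha
      have := htr _ (Finset.mem_image_of_mem (fun a : A => (a : Unitization ℂ A)) ha)
      rwa [hτt, Unitization.snd_inr, Unitization.fst_inr, add_zero] at this
end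
end

section
/- Let A and B be separable C*-algebras, π : A → B a surjective star-algebra homomorphism, and γ : B → A a star-algebra homomorphism with π ∘ γ = id_B (a splitting of the exact sequence 0 → ker π → A → B → 0). Let τ be an MA trace on A that vanishes on ker π. Then the induced trace τ̄ := τ ∘ γ on B (which satisfies τ̄ ∘ π = τ) is an MA trace on B. -/
open scoped Matrix.Norms.L2Operator ComplexOrder
open Matrix Filter TopologicalSpace

noncomputable section

/-- If `0 → ker π → A → B → 0` splits via `γ : B → A` (so `π ∘ γ = id_B`) and `τ` is an MA
trace on `A` vanishing on `ker π`, then the induced trace `τ̄ = τ ∘ γ` on `B` is MA. -/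
theorem isMATrace_quotient_of_split (A B : Type*) [NonUnitalCStarAlgebra A]
    [NonUnitalCStarAlgebra B] [SeparableSpace A] [SeparableSpace B]
    (π : A →⋆ₙₐ[ℂ] B) (hsurj : Function.Surjective π)
    (γ : B →⋆ₙₐ[ℂ] A) (hsplit : ∀ b : B, π (γ b) = b)
    (τ : A →ₗ[ℂ] ℂ) (hτ : IsTrace τ) (hker : ∀ a : A, π a = 0 → τ a = 0)
    (hMA : IsMATrace τ) :
    IsMATrace (τ ∘ₗ (γ : B →ₗ[ℂ] A)) := by
  intro F ε hε
  classical
  obtain ⟨n, hn, φ, ⟨hlin, hstar⟩, hmul, htr⟩ := hMA (F.image γ) ε hε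
  refine ⟨n, hn, φ ∘ γ, ⟨⟨fun x y => by simp [map_add, hlin.map_add],
    fun c x => by simp [_root_.map_smul, hlin.map_smul]⟩,
    fun b => by simp [map_star, hstar]⟩, ?_, ?_⟩
  · intro a ha a' ha'
    have := hmul (γ a) (Finset.mem_image_of_mem γ ha) (γ a')
      (Finset.mem_image_of_mem γ ha')
    simpa [_root_.map_mul] using this
  · intro a ha
    simpa using htr (γ a) (Finset.mem_image_of_mem γ ha)
end
end

section
/- Let A be a separable C*-algebra and Φ an involutory *-antiautomorphism of A, and let A_Φ = {a ∈ A : Φ(a) = a*}. If A_Φ is a real MF algebra, then A is an MF algebra. -/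
open scoped Matrix.Norms.L2Operator ComplexOrder
open Matrix Filter TopologicalSpace

noncomputable section

/-- The real subalgebra `S` of a complex C*-algebra is a real MF algebra: for every finite
`F ⊆ S` and `ε > 0` there are `k ≥ 1` and an `ℝ`-linear star-transpose-preserving map
`ψ : S → Mₖ(ℝ)` (encoded as a map on `A` whose relevant properties hold on `S`) which is
`ε`-almost multiplicative and `ε`-almost norm-preserving on `F`. -/
def IsRealMFOn {A : Type*} [NonUnitalCStarAlgebra A] (S : Set A) : Prop :=
  ∀ (F : Finset A), ↑F ⊆ S → ∀ ε : ℝ, 0 < ε → ∃ k : ℕ, 0 < k ∧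
    ∃ ψ : A → Matrix (Fin k) (Fin k) ℝ,
      (∀ a ∈ S, ∀ b ∈ S, ψ (a + b) = ψ a + ψ b) ∧
      (∀ r : ℝ, ∀ a ∈ S, ψ ((r : ℂ) • a) = r • ψ a) ∧
      (∀ a ∈ S, ψ (star a) = (ψ a)ᵀ) ∧
      (∀ a ∈ F, ∀ b ∈ F, ‖ψ (a * b) - ψ a * ψ b‖ < ε) ∧
      (∀ a ∈ F, ‖a‖ - ε < ‖ψ a‖)

section RealMFAuxSection
set_option linter.unusedSectionVars false
set_option maxHeartbeats 1000000
namespace RealMFAux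

/-! ### Matrix norm lemmas for the ℓ²-operator norm -/

section MatrixNorm
variable {k : Type*} [Fintype k] [DecidableEq k]

lemma euclid_norm {𝕜 : Type*} [RCLike 𝕜] (w : k → 𝕜) :
    ‖(WithLp.equiv 2 (k → 𝕜)).symm w‖ = Real.sqrt (∑ i, ‖w i‖^2) := by
  rw [EuclideanSpace.norm_eq]; rfl

lemma l2_opNorm_le' {𝕜 : Type*} [RCLike 𝕜] (A : Matrix k k 𝕜) {C : ℝ} (hC : 0 ≤ C)
    (h : ∀ x : k → 𝕜, ‖(WithLp.equiv 2 (k → 𝕜)).symm (A *ᵥ x)‖ ≤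
      C * ‖(WithLp.equiv 2 (k → 𝕜)).symm x‖) :
    ‖A‖ ≤ C := by
  rw [Matrix.l2_opNorm_def]
  refine ContinuousLinearMap.opNorm_le_bound _ hC fun x => ?_
  simpa [Matrix.toEuclideanLin_apply] using h ((WithLp.equiv 2 (k → 𝕜)) x)

lemma mulVec_le' {𝕜 : Type*} [RCLike 𝕜] (A : Matrix k k 𝕜) (x : k → 𝕜) :
    ‖(WithLp.equiv 2 (k → 𝕜)).symm (A *ᵥ x)‖ ≤ ‖A‖ * ‖(WithLp.equiv 2 (k → 𝕜)).symm x‖ := by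
  simpa using A.l2_opNorm_mulVec ((WithLp.equiv 2 (k → 𝕜)).symm x)

lemma conj_mulVec (A : Matrix k k ℂ) (x : k → ℂ) :
    (A.map (starRingEnd ℂ)) *ᵥ x = star (A *ᵥ (star x)) := by
  funext i
  simp only [mulVec, dotProduct, Pi.star_apply, map_apply, star_sum, star_mul', star_star]
  exact Finset.sum_congr rfl fun j _ => by rw [Complex.star_def, mul_comm]

lemma norm_symm_star (x : k → ℂ) :
    ‖(WithLp.equiv 2 (k → ℂ)).symm (star x)‖ = ‖(WithLp.equiv 2 (k → ℂ)).symm x‖ := by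
  rw [euclid_norm, euclid_norm]; simp

lemma norm_map_conj (A : Matrix k k ℂ) : ‖A.map (starRingEnd ℂ)‖ = ‖A‖ := by
  have key : ∀ B : Matrix k k ℂ, ‖B.map (starRingEnd ℂ)‖ ≤ ‖B‖ := by
    intro B
    refine l2_opNorm_le' _ (norm_nonneg B) fun x => ?_
    rw [conj_mulVec, norm_symm_star, ← norm_symm_star x]
    exact mulVec_le' B (star x)
  refine le_antisymm (key A) ?_
  have h2 := key (A.map (starRingEnd ℂ))
  rwa [Matrix.map_map,
    show (starRingEnd ℂ) ∘ (starRingEnd ℂ) = id from funext fun z => Complex.conj_conj z,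
    Matrix.map_id] at h2

lemma ofReal_mulVec (P : Matrix k k ℝ) (u : k → ℝ) :
    (P.map (Complex.ofReal)) *ᵥ (fun i => (u i : ℂ)) = fun i => ((P *ᵥ u) i : ℂ) := by
  funext i
  simp only [mulVec, dotProduct, map_apply]
  push_cast
  rfl

lemma norm_symm_ofReal (u : k → ℝ) :
    ‖(WithLp.equiv 2 (k → ℂ)).symm (fun i => (u i : ℂ))‖ = ‖(WithLp.equiv 2 (k → ℝ)).symm u‖ := by
  rw [euclid_norm, euclid_norm]; simp

lemma decomp_mulVec (P : Matrix k k ℝ) (x : k → ℂ) :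
    (P.map (Complex.ofReal)) *ᵥ x
      = fun i => ((P *ᵥ (fun j => (x j).re)) i : ℂ)
          + ((P *ᵥ (fun j => (x j).im)) i : ℂ) * Complex.I := by
  funext i
  simp only [mulVec, dotProduct, map_apply]
  push_cast
  rw [Finset.sum_mul, ← Finset.sum_add_distrib]
  refine Finset.sum_congr rfl fun j _ => ?_
  conv_lhs => rw [← Complex.re_add_im (x j)]
  ring

lemma sq_norm_complex (a b : ℝ) : ‖(a:ℂ) + (b:ℂ) * Complex.I‖^2 = ‖a‖^2 + ‖b‖^2 := by
  simp only [Complex.sq_norm, Complex.normSq_apply, Complex.add_re,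
    Complex.add_im, Complex.ofReal_re, Complex.ofReal_im, Complex.mul_re, Complex.mul_im,
    Complex.I_re, Complex.I_im, Real.norm_eq_abs, sq_abs]
  ring

lemma norm_ofReal_map (P : Matrix k k ℝ) : ‖P.map (Complex.ofReal)‖ = ‖P‖ := by
  refine le_antisymm ?_ ?_
  · refine l2_opNorm_le' _ (norm_nonneg P) fun x => ?_
    set u : k → ℝ := fun j => (x j).re with hu
    set v : k → ℝ := fun j => (x j).im with hv
    have hnn : (0:ℝ) ≤ ‖P‖ * ‖(WithLp.equiv 2 (k → ℂ)).symm x‖ :=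
      mul_nonneg (norm_nonneg _) (norm_nonneg _)
    refine le_of_pow_le_pow_left₀ two_ne_zero hnn ?_
    have h1 : ‖(WithLp.equiv 2 (k → ℂ)).symm ((P.map (Complex.ofReal)) *ᵥ x)‖^2
        = ‖(WithLp.equiv 2 (k → ℝ)).symm (P *ᵥ u)‖^2
          + ‖(WithLp.equiv 2 (k → ℝ)).symm (P *ᵥ v)‖^2 := by
      rw [decomp_mulVec]
      rw [euclid_norm, euclid_norm, euclid_norm,
        Real.sq_sqrt (Finset.sum_nonneg fun i _ => sq_nonneg _),
        Real.sq_sqrt (Finset.sum_nonneg fun i _ => sq_nonneg _),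
        Real.sq_sqrt (Finset.sum_nonneg fun i _ => sq_nonneg _),
        ← Finset.sum_add_distrib]
      exact Finset.sum_congr rfl fun i _ => sq_norm_complex _ _
    have hx : ‖(WithLp.equiv 2 (k → ℂ)).symm x‖^2
        = ‖(WithLp.equiv 2 (k → ℝ)).symm u‖^2 + ‖(WithLp.equiv 2 (k → ℝ)).symm v‖^2 := by
      rw [euclid_norm, euclid_norm, euclid_norm,
        Real.sq_sqrt (Finset.sum_nonneg fun i _ => sq_nonneg _),
        Real.sq_sqrt (Finset.sum_nonneg fun i _ => sq_nonneg _),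
        Real.sq_sqrt (Finset.sum_nonneg fun i _ => sq_nonneg _),
        ← Finset.sum_add_distrib]
      refine Finset.sum_congr rfl fun i _ => ?_
      have := sq_norm_complex (u i) (v i)
      rw [hu, hv] at this ⊢
      simpa [Complex.re_add_im] using this
    have c1 : ‖(WithLp.equiv 2 (k → ℝ)).symm (P *ᵥ u)‖^2
        ≤ ‖P‖^2 * ‖(WithLp.equiv 2 (k → ℝ)).symm u‖^2 := by
      have h := pow_le_pow_left₀ (norm_nonneg _) (mulVec_le' P u) 2
      calc ‖(WithLp.equiv 2 (k → ℝ)).symm (P *ᵥ u)‖^2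
          ≤ (‖P‖ * ‖(WithLp.equiv 2 (k → ℝ)).symm u‖)^2 := h
        _ = ‖P‖^2 * ‖(WithLp.equiv 2 (k → ℝ)).symm u‖^2 := by ring
    have c2 : ‖(WithLp.equiv 2 (k → ℝ)).symm (P *ᵥ v)‖^2
        ≤ ‖P‖^2 * ‖(WithLp.equiv 2 (k → ℝ)).symm v‖^2 := by
      have h := pow_le_pow_left₀ (norm_nonneg _) (mulVec_le' P v) 2
      calc ‖(WithLp.equiv 2 (k → ℝ)).symm (P *ᵥ v)‖^2
          ≤ (‖P‖ * ‖(WithLp.equiv 2 (k → ℝ)).symm v‖)^2 := h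
        _ = ‖P‖^2 * ‖(WithLp.equiv 2 (k → ℝ)).symm v‖^2 := by ring
    rw [h1, mul_pow, hx, mul_add]
    exact add_le_add c1 c2
  · refine l2_opNorm_le' _ (norm_nonneg _) fun u => ?_
    have h := mulVec_le' (P.map (Complex.ofReal)) (fun i => (u i : ℂ))
    rw [ofReal_mulVec, norm_symm_ofReal, norm_symm_ofReal] at h
    exact h

lemma mapR_add (P Q : Matrix k k ℝ) :
    (P + Q).map Complex.ofReal = P.map Complex.ofReal + Q.map Complex.ofReal := by
  ext i j; simp [Matrix.map_apply]

lemma mapR_neg (P : Matrix k k ℝ) : (-P).map Complex.ofReal = -(P.map Complex.ofReal) := by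
  ext i j; simp [Matrix.map_apply]

lemma mapR_sub (P Q : Matrix k k ℝ) :
    (P - Q).map Complex.ofReal = P.map Complex.ofReal - Q.map Complex.ofReal := by
  ext i j; simp [Matrix.map_apply]

lemma mapR_smul (r : ℝ) (P : Matrix k k ℝ) :
    (r • P).map Complex.ofReal = (r : ℂ) • (P.map Complex.ofReal) := by
  ext i j; simp [Matrix.map_apply]

lemma mapR_mul (P Q : Matrix k k ℝ) :
    (P * Q).map Complex.ofReal = P.map Complex.ofReal * Q.map Complex.ofReal := by
  ext i j; simp [Matrix.map_apply, Matrix.mul_apply]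

lemma mapR_transpose (P : Matrix k k ℝ) :
    (Pᵀ).map Complex.ofReal = (P.map Complex.ofReal)ᴴ := by
  ext i j
  simp [Matrix.map_apply, Matrix.conjTranspose_apply, Complex.conj_ofReal]

lemma conj_of_reim (P Q : Matrix k k ℝ) :
    (P.map Complex.ofReal + Complex.I • Q.map Complex.ofReal).map (starRingEnd ℂ)
      = P.map Complex.ofReal - Complex.I • Q.map Complex.ofReal := by
  ext i j
  simp [Matrix.map_apply, Matrix.add_apply, Matrix.sub_apply, Matrix.smul_apply, Complex.ext_iff]

lemma norm_re_le (P Q : Matrix k k ℝ) :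
    ‖P‖ ≤ ‖P.map Complex.ofReal + Complex.I • Q.map Complex.ofReal‖ := by
  set M := P.map Complex.ofReal + Complex.I • Q.map Complex.ofReal with hM
  have h1 : P.map Complex.ofReal = (2:ℂ)⁻¹ • (M + M.map (starRingEnd ℂ)) := by
    rw [conj_of_reim]
    ext i j
    simp [hM, Matrix.map_apply, Matrix.add_apply, Matrix.sub_apply, Matrix.smul_apply, Complex.ext_iff]
    ring_nf
    try ring
  have h2 : ‖P.map Complex.ofReal‖ ≤ ‖M‖ := by
    rw [h1]
    have := norm_smul ((2:ℂ)⁻¹) (M + M.map (starRingEnd ℂ))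
    rw [this]
    have h3 : ‖M + M.map (starRingEnd ℂ)‖ ≤ ‖M‖ + ‖M‖ := by
      calc ‖M + M.map (starRingEnd ℂ)‖ ≤ ‖M‖ + ‖M.map (starRingEnd ℂ)‖ := norm_add_le _ _
        _ = ‖M‖ + ‖M‖ := by rw [norm_map_conj]
    have h4 : ‖(2:ℂ)⁻¹‖ = 1/2 := by simp
    rw [h4]
    linarith
  rw [← norm_ofReal_map P]
  exact h2

lemma norm_im_le (P Q : Matrix k k ℝ) :
    ‖Q‖ ≤ ‖P.map Complex.ofReal + Complex.I • Q.map Complex.ofReal‖ := by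
  set M := P.map Complex.ofReal + Complex.I • Q.map Complex.ofReal with hM
  have h1 : Q.map Complex.ofReal = (-(2:ℂ)⁻¹ * Complex.I) • (M - M.map (starRingEnd ℂ)) := by
    rw [conj_of_reim]
    ext i j
    simp [hM, Matrix.map_apply, Matrix.add_apply, Matrix.sub_apply, Matrix.smul_apply, Complex.ext_iff]
    ring_nf
    try ring
  have h2 : ‖Q.map Complex.ofReal‖ ≤ ‖M‖ := by
    rw [h1, norm_smul]
    have h3 : ‖M - M.map (starRingEnd ℂ)‖ ≤ ‖M‖ + ‖M‖ := by
      calc ‖M - M.map (starRingEnd ℂ)‖ ≤ ‖M‖ + ‖M.map (starRingEnd ℂ)‖ := norm_sub_le _ _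
        _ = ‖M‖ + ‖M‖ := by rw [norm_map_conj]
    have h4 : ‖(-(2:ℂ)⁻¹ * Complex.I)‖ = 1/2 := by simp
    rw [h4]
    linarith
  rw [← norm_ofReal_map Q]
  exact h2

end MatrixNorm

/-! ### Arithmetic helper -/

lemma add_pow_ge (x δ : ℝ) (hx : 0 ≤ x) (hδ : 0 ≤ δ) :
    ∀ n : ℕ, 1 ≤ n → x^n + δ^n ≤ (x+δ)^n := by
  intro n hn
  induction n with
  | zero => omega
  | succ n IH =>
    rcases Nat.eq_zero_or_pos n with h0 | h0
    · subst h0; simp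
    · have hIH := IH h0
      have e1 : (x+δ)^(n+1) = (x+δ)^n * (x+δ) := pow_succ _ _
      have e2 : (x^n + δ^n) * (x+δ) ≤ (x+δ)^n * (x+δ) :=
        mul_le_mul_of_nonneg_right hIH (add_nonneg hx hδ)
      have e3 : x^(n+1) + δ^(n+1) ≤ (x^n + δ^n)*(x+δ) := by
        have g1 : (0:ℝ) ≤ x^n * δ := mul_nonneg (pow_nonneg hx n) hδ
        have g2 : (0:ℝ) ≤ δ^n * x := mul_nonneg (pow_nonneg hδ n) hx
        have g3 : x^(n+1) = x^n * x := pow_succ _ _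
        have g4 : δ^(n+1) = δ^n * δ := pow_succ _ _
        nlinarith
      linarith

/-! ### Decomposition with respect to the antiautomorphism -/

variable {A : Type*} [NonUnitalCStarAlgebra A] (Φ : A →ₗ[ℂ] A)

def xp (c : A) : A := (2:ℂ)⁻¹ • (c + star (Φ c))
def yp (c : A) : A := (-(2:ℂ)⁻¹ * Complex.I) • (c - star (Φ c))

lemma decomp (c : A) : xp Φ c + Complex.I • yp Φ c = c := by
  simp only [xp, yp, smul_smul]
  rw [show Complex.I * (-(2:ℂ)⁻¹ * Complex.I) = (2:ℂ)⁻¹ by norm_num [Complex.ext_iff]]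
  module

section withh
variable (hstar : ∀ a : A, Φ (star a) = star (Φ a)) (hinv : ∀ a : A, Φ (Φ a) = a)
include hstar hinv

lemma xp_mem (c : A) : Φ (xp Φ c) = star (xp Φ c) := by
  simp only [xp, LinearMap.map_smul, map_add, hstar, hinv, star_smul, star_add, star_star]
  rw [show star ((2:ℂ)⁻¹) = (2:ℂ)⁻¹ by norm_num [Complex.ext_iff]]
  module

lemma yp_mem (c : A) : Φ (yp Φ c) = star (yp Φ c) := by
  simp only [yp, LinearMap.map_smul, map_sub, hstar, hinv, star_smul, star_sub, star_star]
  rw [show star (-(2:ℂ)⁻¹ * Complex.I) = (2:ℂ)⁻¹ * Complex.I by norm_num [Complex.ext_iff]]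
  match_scalars <;> norm_num [Complex.ext_iff]

lemma xp_star (c : A) : xp Φ (star c) = star (xp Φ c) := by
  simp only [xp, LinearMap.map_smul, map_add, hstar, hinv, star_smul, star_add, star_star]
  rw [show star ((2:ℂ)⁻¹) = (2:ℂ)⁻¹ by norm_num [Complex.ext_iff]]
  all_goals module

lemma yp_star (c : A) : yp Φ (star c) = - star (yp Φ c) := by
  simp only [yp, LinearMap.map_smul, map_sub, hstar, hinv, star_smul, star_sub, star_star]
  rw [show star (-(2:ℂ)⁻¹ * Complex.I) = (2:ℂ)⁻¹ * Complex.I by norm_num [Complex.ext_iff]]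
  match_scalars <;> norm_num [Complex.ext_iff]

end withh

lemma xp_add (c c' : A) : xp Φ (c + c') = xp Φ c + xp Φ c' := by
  simp only [xp, map_add, star_add]; module

lemma yp_add (c c' : A) : yp Φ (c + c') = yp Φ c + yp Φ c' := by
  simp only [yp, map_sub, map_add, star_add]; module

lemma xp_real_smul (r : ℝ) (c : A) : xp Φ ((r:ℂ) • c) = (r:ℂ) • xp Φ c := by
  simp only [xp, LinearMap.map_smul, star_smul]
  rw [show star ((r:ℂ)) = (r:ℂ) by norm_num [Complex.ext_iff]]
  module

lemma yp_real_smul (r : ℝ) (c : A) : yp Φ ((r:ℂ) • c) = (r:ℂ) • yp Φ c := by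
  simp only [yp, LinearMap.map_smul, star_smul]
  rw [show star ((r:ℂ)) = (r:ℂ) by norm_num [Complex.ext_iff]]
  module

lemma xp_I_smul (c : A) : xp Φ (Complex.I • c) = - yp Φ c := by
  simp only [xp, yp, LinearMap.map_smul, star_smul]
  rw [show star (Complex.I) = -Complex.I by simp]
  match_scalars <;> norm_num [Complex.ext_iff]

lemma yp_I_smul (c : A) : yp Φ (Complex.I • c) = xp Φ c := by
  simp only [xp, yp, LinearMap.map_smul, star_smul]
  rw [show star (Complex.I) = -Complex.I by simp]
  match_scalars <;> norm_num [Complex.ext_iff]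

lemma xp_of_mem {u v : A} (hu : Φ u = star u) (hv : Φ v = star v) :
    xp Φ (u + Complex.I • v) = u := by
  simp only [xp, map_add, LinearMap.map_smul, hu, hv, star_add, star_smul, star_star]
  rw [show star (Complex.I) = -Complex.I by simp]
  match_scalars <;> norm_num [Complex.ext_iff]

lemma yp_of_mem {u v : A} (hu : Φ u = star u) (hv : Φ v = star v) :
    yp Φ (u + Complex.I • v) = v := by
  simp only [yp, map_add, map_sub, LinearMap.map_smul, hu, hv, star_add, star_smul, star_star]
  rw [show star (Complex.I) = -Complex.I by simp]
  match_scalars <;> norm_num [Complex.ext_iff]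



section Mul
variable {A : Type*} [NonUnitalCStarAlgebra A] (Φ : A →ₗ[ℂ] A)
variable (hmul : ∀ a b : A, Φ (a * b) = Φ b * Φ a)
variable (hstar : ∀ a : A, Φ (star a) = star (Φ a)) (hinv : ∀ a : A, Φ (Φ a) = a)
include hmul hstar hinv

lemma mul_decomp (c c' : A) :
    c * c' = (xp Φ c * xp Φ c' - yp Φ c * yp Φ c')
      + Complex.I • (xp Φ c * yp Φ c' + yp Φ c * xp Φ c') := by
  conv_lhs => rw [← decomp Φ c, ← decomp Φ c']
  simp only [mul_add, add_mul, smul_mul_assoc, mul_smul_comm, smul_smul, Complex.I_mul_I,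
    neg_one_smul, smul_add]
  module

lemma memS_pair1 (c c' : A) :
    Φ (xp Φ c * xp Φ c' - yp Φ c * yp Φ c') = star (xp Φ c * xp Φ c' - yp Φ c * yp Φ c') := by
  rw [map_sub, hmul, hmul, xp_mem Φ hstar hinv, xp_mem Φ hstar hinv,
    yp_mem Φ hstar hinv, yp_mem Φ hstar hinv, star_sub, StarMul.star_mul, StarMul.star_mul]

lemma memS_pair2 (c c' : A) :
    Φ (xp Φ c * yp Φ c' + yp Φ c * xp Φ c') = star (xp Φ c * yp Φ c' + yp Φ c * xp Φ c') := by
  rw [map_add, hmul, hmul, xp_mem Φ hstar hinv, xp_mem Φ hstar hinv,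
    yp_mem Φ hstar hinv, yp_mem Φ hstar hinv, star_add, StarMul.star_mul, StarMul.star_mul]

lemma xp_mul (c c' : A) :
    xp Φ (c * c') = xp Φ c * xp Φ c' - yp Φ c * yp Φ c' := by
  conv_lhs => rw [mul_decomp Φ hmul hstar hinv c c']
  exact xp_of_mem Φ (memS_pair1 Φ hmul hstar hinv c c') (memS_pair2 Φ hmul hstar hinv c c')

lemma yp_mul (c c' : A) :
    yp Φ (c * c') = xp Φ c * yp Φ c' + yp Φ c * xp Φ c' := by
  conv_lhs => rw [mul_decomp Φ hmul hstar hinv c c']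
  exact yp_of_mem Φ (memS_pair1 Φ hmul hstar hinv c c') (memS_pair2 Φ hmul hstar hinv c c')

end Mul

/-! ### Iterated squares -/

section Csq
variable {A : Type*} [NonUnitalCStarAlgebra A]

def csq (a : A) : ℕ → A
  | 0 => star a * a
  | (j+1) => csq a j * csq a j

@[simp] lemma csq_zero (a : A) : csq a 0 = star a * a := rfl
@[simp] lemma csq_succ (a : A) (j : ℕ) : csq a (j+1) = csq a j * csq a j := rfl

lemma csq_sa (a : A) : ∀ j, star (csq a j) = csq a j := by
  intro j
  induction j with
  | zero => simp [csq, StarMul.star_mul]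
  | succ j IH => simp [csq, StarMul.star_mul, IH]

lemma csq_norm (a : A) : ∀ j, ‖csq a j‖ = ‖a‖^(2^(j+1)) := by
  intro j
  induction j with
  | zero =>
    show ‖star a * a‖ = ‖a‖^(2^1)
    rw [CStarRing.norm_star_mul_self]
    norm_num
    ring
  | succ j IH =>
    have h := CStarRing.norm_star_mul_self (x := csq a j)
    rw [csq_sa] at h
    show ‖csq a j * csq a j‖ = ‖a‖^(2^(j+2))
    rw [h, IH, ← pow_add]
    congr 1
    ring

end Csq

end RealMFAux
end RealMFAuxSection

set_option maxHeartbeats 2000000 in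
/-- If `Φ` is an involutory `*`-antiautomorphism of a separable C*-algebra `A` and the real
C*-algebra `A_Φ = {a : Φ(a) = a*}` is a real MF algebra, then `A` is an MF algebra. -/
theorem isMFAlgebra_of_isRealMFOn (A : Type*) [NonUnitalCStarAlgebra A] [SeparableSpace A]
    (Φ : A →ₗ[ℂ] A) (hmul : ∀ a b : A, Φ (a * b) = Φ b * Φ a)
    (hstar : ∀ a : A, Φ (star a) = star (Φ a)) (hinv : ∀ a : A, Φ (Φ a) = a)
    (h : IsRealMFOn {a : A | Φ a = star a}) :
    IsMFAlgebra A := by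
    classical
  intro F ε hε
  obtain ⟨hmulA, hstarA, hinvA⟩ := And.intro hmul (And.intro hstar hinv)
  -- membership helpers for S = {a | Φ a = star a}
  have hSx : ∀ c : A, Φ (RealMFAux.xp Φ c) = star (RealMFAux.xp Φ c) :=
    fun c => RealMFAux.xp_mem Φ hstar hinv c
  have hSy : ∀ c : A, Φ (RealMFAux.yp Φ c) = star (RealMFAux.yp Φ c) :=
    fun c => RealMFAux.yp_mem Φ hstar hinv c
  have hSmul : ∀ u v : A, Φ u = star u → Φ v = star v → Φ (u * v) = star (u * v) := by
    intro u v hu hv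
    rw [hmul, hu, hv, StarMul.star_mul]
  have hSstar : ∀ u : A, Φ u = star u → Φ (star u) = star (star u) := by
    intro u hu
    rw [hstar, hu]
  -- choice of m and δ for each element
  have hchoice : ∀ a : A, ∃ (m : ℕ) (δ : ℝ), 0 < δ ∧ δ ≤ 1 ∧ 2*((m:ℝ)+1)*δ ≤ ε ∧
      (ε ≤ ‖a‖ → (‖a‖ - ε/2)^(2^(m+1)) < ‖a‖^(2^(m+1))/4 ∧ δ ≤ ‖a‖^(2^(m+1))/4) := by
    intro a
    by_cases hra : ε ≤ ‖a‖
    · set r := ‖a‖ with hr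
      have hr0 : 0 < r := lt_of_lt_of_le hε hra
      set ρ : ℝ := (r - ε/2)/r with hρ
      have hρ0 : 0 ≤ ρ := div_nonneg (by linarith) hr0.le
      have hρ1 : ρ < 1 := (div_lt_one hr0).2 (by linarith)
      obtain ⟨nn, hnn⟩ := exists_pow_lt_of_lt_one (show (0:ℝ) < 1/4 by norm_num) hρ1
      refine ⟨nn, min 1 (min (ε/(2*((nn:ℝ)+1))) (r^(2^(nn+1))/4)), ?_, ?_, ?_, ?_⟩
      · have : (0:ℝ) < ε/(2*((nn:ℝ)+1)) := by positivity
        have : (0:ℝ) < r^(2^(nn+1))/4 := by positivity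
        simp only [lt_min_iff]
        refine ⟨one_pos, by positivity, by positivity⟩
      · exact min_le_left _ _
      · have h1 : min 1 (min (ε/(2*((nn:ℝ)+1))) (r^(2^(nn+1))/4)) ≤ ε/(2*((nn:ℝ)+1)) :=
          le_trans (min_le_right _ _) (min_le_left _ _)
        have h2 : (0:ℝ) < 2*((nn:ℝ)+1) := by positivity
        calc 2*((nn:ℝ)+1) * min 1 (min (ε/(2*((nn:ℝ)+1))) (r^(2^(nn+1))/4))
            ≤ 2*((nn:ℝ)+1) * (ε/(2*((nn:ℝ)+1))) :=
              mul_le_mul_of_nonneg_left h1 h2.le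
          _ = ε := by field_simp
      · intro _
        constructor
        · have hNn : nn ≤ 2^(nn+1) := by
            calc nn ≤ 2^nn := (Nat.lt_two_pow_self).le
              _ ≤ 2^(nn+1) := Nat.pow_le_pow_right (by norm_num) (Nat.le_succ nn)
          have hρN : ρ^(2^(nn+1)) ≤ ρ^nn := pow_le_pow_of_le_one hρ0 hρ1.le hNn
          have heq : r - ε/2 = ρ * r := by
            rw [hρ]; field_simp
          rw [heq, mul_pow]
          have hrN : (0:ℝ) < r^(2^(nn+1)) := pow_pos hr0 _
          calc ρ^(2^(nn+1)) * r^(2^(nn+1)) ≤ ρ^nn * r^(2^(nn+1)) :=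
                mul_le_mul_of_nonneg_right hρN hrN.le
            _ < (1/4) * r^(2^(nn+1)) := mul_lt_mul_of_pos_right hnn hrN
            _ = r^(2^(nn+1))/4 := by ring
        · exact le_trans (min_le_right _ _) (min_le_right _ _)
    · refine ⟨0, min 1 (ε/2), ?_, min_le_left _ _, ?_, fun hra' => absurd hra' hra⟩
      · simp only [lt_min_iff]
        exact ⟨one_pos, by positivity⟩
      · have h1 : min 1 (ε/2) ≤ ε/2 := min_le_right _ _
        push_cast
        linarith
  choose md δd hδpos hδ1 hδε hkey using hchoice
  -- the finite sets
  set G : Finset A := F.biUnion (fun a => insert a (insert (star a)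
    ((Finset.range (md a + 1)).image (fun j => RealMFAux.csq a j)))) with hGdef
  have haG : ∀ a ∈ F, a ∈ G := fun a ha =>
    Finset.mem_biUnion.2 ⟨a, ha, Finset.mem_insert_self _ _⟩
  have hstarG : ∀ a ∈ F, star a ∈ G := fun a ha =>
    Finset.mem_biUnion.2 ⟨a, ha, Finset.mem_insert_of_mem (Finset.mem_insert_self _ _)⟩
  have hcsqG : ∀ a ∈ F, ∀ j, j ≤ md a → RealMFAux.csq a j ∈ G := fun a ha j hj =>
    Finset.mem_biUnion.2 ⟨a, ha, Finset.mem_insert_of_mem (Finset.mem_insert_of_mem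
      (Finset.mem_image_of_mem _ (Finset.mem_range.2 (by omega))))⟩
  set F' : Finset A := G.image (RealMFAux.xp Φ) ∪ G.image (RealMFAux.yp Φ) with hF'def
  have hF'S : ↑F' ⊆ {a : A | Φ a = star a} := by
    intro s hs
    simp only [hF'def, Finset.coe_union, Set.mem_union, Finset.coe_image, Set.mem_image] at hs
    rcases hs with ⟨c, _, rfl⟩ | ⟨c, _, rfl⟩
    · exact hSx c
    · exact hSy c
  have hxF' : ∀ c ∈ G, RealMFAux.xp Φ c ∈ F' := fun c hc =>
    Finset.mem_union_left _ (Finset.mem_image_of_mem _ hc)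
  have hyF' : ∀ c ∈ G, RealMFAux.yp Φ c ∈ F' := fun c hc =>
    Finset.mem_union_right _ (Finset.mem_image_of_mem _ hc)
  -- the tolerance ε'
  set T : Finset ℝ := insert 1 (F.image (fun a => (δd a)^(2^(md a+1))/4)) with hTdef
  have hTne : T.Nonempty := ⟨1, Finset.mem_insert_self _ _⟩
  set ε' : ℝ := min (ε/4) (T.min' hTne) with hε'def
  have hε'pos : 0 < ε' := by
    refine lt_min (by linarith) ?_
    have hmem := T.min'_mem hTne
    rcases Finset.mem_insert.1 hmem with hm | hm
    · rw [hm]; norm_num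
    · obtain ⟨a, _, ha⟩ := Finset.mem_image.1 hm
      rw [← ha]
      have := hδpos a
      positivity
  have hε'ε : 4*ε' ≤ ε := by
    have := min_le_left (ε/4) (T.min' hTne)
    have h2 : ε' ≤ ε/4 := by rw [hε'def]; exact min_le_left _ _
    linarith
  have hε'δ : ∀ a ∈ F, 4*ε' ≤ (δd a)^(2^(md a+1)) := by
    intro a ha
    have h1 : ε' ≤ (δd a)^(2^(md a+1))/4 := by
      rw [hε'def]
      refine le_trans (min_le_right _ _) (T.min'_le _ ?_)
      exact Finset.mem_insert_of_mem (Finset.mem_image_of_mem _ ha)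
    linarith
  -- apply the real MF hypothesis
  obtain ⟨k, hk0, ψ, hψadd, hψsmul, hψstar, hψmul, hψnorm⟩ := h F' hF'S ε' hε'pos
  have instNSG : NormedStarGroup (MatC k) := CStarRing.to_normedStarGroup
  -- derived ψ lemmas
  have hψneg : ∀ u : A, Φ u = star u → ψ (-u) = - ψ u := by
    intro u hu
    have := hψsmul (-1) u hu
    simpa using this
  have hψsub : ∀ u v : A, Φ u = star u → Φ v = star v → ψ (u - v) = ψ u - ψ v := by
    intro u v hu hv
    have hnv : Φ (-v) = star (-v) := by rw [map_neg, hv, star_neg]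
    rw [sub_eq_add_neg, hψadd u hu (-v) hnv, hψneg v hv, sub_eq_add_neg]
  -- the approximating map φ
  set φ : A → MatC k := fun c =>
    (ψ (RealMFAux.xp Φ c)).map Complex.ofReal
      + Complex.I • (ψ (RealMFAux.yp Φ c)).map Complex.ofReal with hφdef
  have hφadd : ∀ c c' : A, φ (c + c') = φ c + φ c' := by
    intro c c'
    simp only [hφdef]
    rw [RealMFAux.xp_add, RealMFAux.yp_add, hψadd _ (hSx c) _ (hSx c'),
      hψadd _ (hSy c) _ (hSy c'), RealMFAux.mapR_add, RealMFAux.mapR_add, smul_add]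
    abel
  have hφrsmul : ∀ (r : ℝ) (c : A), φ ((r:ℂ) • c) = (r:ℂ) • φ c := by
    intro r c
    simp only [hφdef]
    rw [RealMFAux.xp_real_smul, RealMFAux.yp_real_smul, hψsmul r _ (hSx c),
      hψsmul r _ (hSy c), RealMFAux.mapR_smul, RealMFAux.mapR_smul, smul_comm Complex.I,
      smul_add]
  have hφIsmul : ∀ c : A, φ (Complex.I • c) = Complex.I • φ c := by
    intro c
    simp only [hφdef]
    rw [RealMFAux.xp_I_smul, RealMFAux.yp_I_smul, hψneg _ (hSy c), RealMFAux.mapR_neg]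
    rw [smul_add, smul_smul, Complex.I_mul_I, neg_one_smul]
    abel
  have hφsmul : ∀ (z : ℂ) (c : A), φ (z • c) = z • φ c := by
    intro z c
    have hzc : z • c = ((z.re:ℝ):ℂ) • c + ((z.im:ℝ):ℂ) • (Complex.I • c) := by
      rw [smul_smul, ← add_smul, Complex.re_add_im]
    rw [hzc, hφadd, hφrsmul, hφrsmul, hφIsmul, smul_smul, ← add_smul, Complex.re_add_im]
  have hφstar : ∀ c : A, φ (star c) = star (φ c) := by
    intro c
    simp only [hφdef]
    rw [RealMFAux.xp_star Φ hstar hinv, RealMFAux.yp_star Φ hstar hinv,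
      hψstar _ (hSx c), hψneg _ (hSstar _ (hSy c)), hψstar _ (hSy c),
      RealMFAux.mapR_transpose, RealMFAux.mapR_neg, RealMFAux.mapR_transpose]
    rw [star_add, star_smul, Matrix.star_eq_conjTranspose, Matrix.star_eq_conjTranspose]
    rw [show (star Complex.I) = -Complex.I by simp]
    rw [smul_neg, neg_smul]
  -- approximate multiplicativity on G
  have hφmul : ∀ c ∈ G, ∀ c' ∈ G, ‖φ (c * c') - φ c * φ c'‖ < 4 * ε' := by
    intro c hc c' hc'
    set E1 := ψ (RealMFAux.xp Φ c * RealMFAux.xp Φ c')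
      - ψ (RealMFAux.xp Φ c) * ψ (RealMFAux.xp Φ c') with hE1
    set E2 := ψ (RealMFAux.yp Φ c * RealMFAux.yp Φ c')
      - ψ (RealMFAux.yp Φ c) * ψ (RealMFAux.yp Φ c') with hE2
    set E3 := ψ (RealMFAux.xp Φ c * RealMFAux.yp Φ c')
      - ψ (RealMFAux.xp Φ c) * ψ (RealMFAux.yp Φ c') with hE3
    set E4 := ψ (RealMFAux.yp Φ c * RealMFAux.xp Φ c')
      - ψ (RealMFAux.yp Φ c) * ψ (RealMFAux.xp Φ c') with hE4
    have e1 : φ (c * c') - φ c * φ c'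
        = (E1 - E2).map Complex.ofReal + Complex.I • (E3 + E4).map Complex.ofReal := by
      simp only [hφdef]
      rw [RealMFAux.xp_mul Φ hmul hstar hinv, RealMFAux.yp_mul Φ hmul hstar hinv,
        hψsub _ _ (hSmul _ _ (hSx c) (hSx c')) (hSmul _ _ (hSy c) (hSy c')),
        hψadd _ (hSmul _ _ (hSx c) (hSy c')) _ (hSmul _ _ (hSy c) (hSx c'))]
      rw [hE1, hE2, hE3, hE4]
      simp only [RealMFAux.mapR_sub, RealMFAux.mapR_add, RealMFAux.mapR_mul]
      simp only [mul_add, add_mul, smul_mul_assoc, mul_smul_comm, smul_smul,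
        Complex.I_mul_I, neg_one_smul, smul_add, smul_sub]
      module
    have hb1 : ‖E1‖ < ε' := hψmul _ (hxF' c hc) _ (hxF' c' hc')
    have hb2 : ‖E2‖ < ε' := hψmul _ (hyF' c hc) _ (hyF' c' hc')
    have hb3 : ‖E3‖ < ε' := hψmul _ (hxF' c hc) _ (hyF' c' hc')
    have hb4 : ‖E4‖ < ε' := hψmul _ (hyF' c hc) _ (hxF' c' hc')
    rw [e1]
    calc ‖(E1 - E2).map Complex.ofReal + Complex.I • (E3 + E4).map Complex.ofReal‖
        ≤ ‖(E1 - E2).map Complex.ofReal‖ + ‖Complex.I • (E3 + E4).map Complex.ofReal‖ :=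
          norm_add_le _ _
      _ = ‖E1 - E2‖ + ‖E3 + E4‖ := by
          rw [RealMFAux.norm_ofReal_map, norm_smul, Complex.norm_I, one_mul,
            RealMFAux.norm_ofReal_map]
      _ ≤ (‖E1‖ + ‖E2‖) + (‖E3‖ + ‖E4‖) := add_le_add (norm_sub_le _ _) (norm_add_le _ _)
      _ < 4 * ε' := by linarith
  -- lower norm bound on G
  have hφlow : ∀ c ∈ G, ‖c‖/2 - ε' < ‖φ c‖ := by
    intro c hc
    have h1 : ‖ψ (RealMFAux.xp Φ c)‖ ≤ ‖φ c‖ := by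
      simp only [hφdef]
      exact RealMFAux.norm_re_le _ _
    have h2 : ‖ψ (RealMFAux.yp Φ c)‖ ≤ ‖φ c‖ := by
      simp only [hφdef]
      exact RealMFAux.norm_im_le _ _
    have h3 : ‖RealMFAux.xp Φ c‖ - ε' < ‖ψ (RealMFAux.xp Φ c)‖ := hψnorm _ (hxF' c hc)
    have h4 : ‖RealMFAux.yp Φ c‖ - ε' < ‖ψ (RealMFAux.yp Φ c)‖ := hψnorm _ (hyF' c hc)
    have h5 : ‖c‖ ≤ ‖RealMFAux.xp Φ c‖ + ‖RealMFAux.yp Φ c‖ := by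
      conv_lhs => rw [← RealMFAux.decomp Φ c]
      calc ‖RealMFAux.xp Φ c + Complex.I • RealMFAux.yp Φ c‖
          ≤ ‖RealMFAux.xp Φ c‖ + ‖Complex.I • RealMFAux.yp Φ c‖ := norm_add_le _ _
        _ = ‖RealMFAux.xp Φ c‖ + ‖RealMFAux.yp Φ c‖ := by
            rw [norm_smul, Complex.norm_I, one_mul]
    rcases le_total (‖RealMFAux.xp Φ c‖) (‖RealMFAux.yp Φ c‖) with hcase | hcase
    · linarith
    · linarith
  -- conclude
  refine ⟨k, hk0, φ, ⟨⟨fun c c' => hφadd c c', fun z c => hφsmul z c⟩, hφstar⟩, ?_, ?_⟩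
  · intro a ha a' ha'
    calc ‖φ (a * a') - φ a * φ a'‖ < 4 * ε' := hφmul a (haG a ha) a' (haG a' ha')
      _ ≤ ε := hε'ε
  · intro a ha
    by_cases hra : ε ≤ ‖a‖
    swap
    · push_neg at hra
      calc ‖a‖ - ε < 0 := by linarith
        _ ≤ ‖φ a‖ := norm_nonneg _
    by_contra hcon
    push_neg at hcon
    obtain ⟨hk1, hk2⟩ := hkey a hra
    set m := md a with hm
    set δ := δd a with hδ
    set N := 2^(m+1) with hN
    set r := ‖a‖ with hr
    set t := ‖φ a‖ with ht
    have ht0 : 0 ≤ t := norm_nonneg _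
    have hδ0 : 0 < δ := hδpos a
    have hδ1' : δ ≤ 1 := hδ1 a
    have hδN4 : 4*ε' ≤ δ^N := hε'δ a ha
    have hNpos : 0 < N := Nat.two_pow_pos _
    have hδNδ : δ^N ≤ δ := pow_le_of_le_one hδ0.le hδ1' hNpos.ne'
    have hε'leδ : ε' ≤ δ := by linarith [hε'pos]
    have hsn : ‖φ (star a)‖ = t := by rw [hφstar]; exact norm_star _
    set u : ℕ → ℝ := fun j => ‖φ (RealMFAux.csq a j)‖ with hu
    have hu0 : u 0 ≤ t*t + 4*ε' := by
      have hmm := hφmul (star a) (hstarG a ha) a (haG a ha)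
      have hsplit : φ (star a * a)
          = (φ (star a * a) - φ (star a) * φ a) + φ (star a) * φ a := by abel
      calc u 0 = ‖φ (star a * a)‖ := by simp only [hu, RealMFAux.csq_zero]
        _ ≤ ‖φ (star a * a) - φ (star a) * φ a‖ + ‖φ (star a) * φ a‖ := by
            conv_lhs => rw [hsplit]
            exact norm_add_le _ _
        _ ≤ 4*ε' + ‖φ (star a)‖ * ‖φ a‖ := add_le_add hmm.le (norm_mul_le _ _)
        _ = t*t + 4*ε' := by rw [hsn]; ring
    have hustep : ∀ j, j < m → u (j+1) ≤ u j * u j + 4*ε' := by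
      intro j hj
      have hmm := hφmul (RealMFAux.csq a j) (hcsqG a ha j (by omega))
        (RealMFAux.csq a j) (hcsqG a ha j (by omega))
      have hsplit : φ (RealMFAux.csq a j * RealMFAux.csq a j)
          = (φ (RealMFAux.csq a j * RealMFAux.csq a j)
              - φ (RealMFAux.csq a j) * φ (RealMFAux.csq a j))
            + φ (RealMFAux.csq a j) * φ (RealMFAux.csq a j) := by abel
      calc u (j+1) = ‖φ (RealMFAux.csq a j * RealMFAux.csq a j)‖ := by
            simp only [hu, RealMFAux.csq_succ]
        _ ≤ ‖φ (RealMFAux.csq a j * RealMFAux.csq a j)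
              - φ (RealMFAux.csq a j) * φ (RealMFAux.csq a j)‖
            + ‖φ (RealMFAux.csq a j) * φ (RealMFAux.csq a j)‖ := by
            conv_lhs => rw [hsplit]
            exact norm_add_le _ _
        _ ≤ 4*ε' + u j * u j := add_le_add hmm.le (norm_mul_le _ _)
        _ = u j * u j + 4*ε' := by ring
    have hmain : ∀ j, j ≤ m → u j ≤ (t + (((j+1 : ℕ)) : ℝ)*δ)^(2^(j+1)) := by
      intro j
      induction j with
      | zero =>
        intro _
        have h2N : 2 ≤ N := by
          rw [hN]
          calc 2 = 2^1 := by norm_num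
            _ ≤ 2^(m+1) := Nat.pow_le_pow_right (by norm_num) (by omega)
        have hδN2 : δ^N ≤ δ^2 := pow_le_pow_of_le_one hδ0.le hδ1' h2N
        have hgoal : u 0 ≤ (t+δ)^2 := by nlinarith [hu0]
        have hexp : (t + (((0+1 : ℕ)) : ℝ)*δ)^(2^(0+1)) = (t+δ)^2 := by norm_num
        rw [hexp]
        exact hgoal
      | succ j IH =>
        intro hj1
        have hIH := IH (by omega)
        have hbase : (0:ℝ) ≤ t + (((j+1 : ℕ)) : ℝ)*δ := by positivity
        have hun : 0 ≤ u j := norm_nonneg _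
        calc u (j+1) ≤ u j * u j + 4*ε' := hustep j (by omega)
          _ ≤ (t + (((j+1 : ℕ)) : ℝ)*δ)^(2^(j+1)) * (t + (((j+1 : ℕ)) : ℝ)*δ)^(2^(j+1)) + 4*ε' := by
              nlinarith
          _ = (t + (((j+1 : ℕ)) : ℝ)*δ)^(2^(j+2)) + 4*ε' := by
              rw [← pow_add]
              congr 1
              ring
          _ ≤ (t + (((j+1 : ℕ)) : ℝ)*δ)^(2^(j+2)) + δ^(2^(j+2)) := by
              have hjN : 2^(j+2) ≤ N := by
                rw [hN]
                exact Nat.pow_le_pow_right (by norm_num) (by omega)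
              have hδj : δ^N ≤ δ^(2^(j+2)) := pow_le_pow_of_le_one hδ0.le hδ1' hjN
              linarith
          _ ≤ ((t + (((j+1 : ℕ)) : ℝ)*δ) + δ)^(2^(j+2)) :=
              RealMFAux.add_pow_ge _ _ hbase hδ0.le _ (Nat.two_pow_pos _)
          _ = (t + (((j+1+1 : ℕ)) : ℝ)*δ)^(2^(j+1+1)) := by
              push_cast
              ring_nf
    have hfin1 : r^N/2 - ε' < u m := by
      have hlow := hφlow (RealMFAux.csq a m) (hcsqG a ha m le_rfl)
      rw [RealMFAux.csq_norm] at hlow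
      exact hlow
    have hfin2 : u m ≤ (t + (((m+1:ℕ)):ℝ)*δ)^N := hmain m le_rfl
    have hfin3 : t + (((m+1:ℕ)):ℝ)*δ ≤ r - ε/2 := by
      have hde := hδε a
      have hcon' : t ≤ r - ε := hcon
      push_cast
      push_cast at hde
      linarith
    have hfin4 : (t + (((m+1:ℕ)):ℝ)*δ)^N ≤ (r - ε/2)^N :=
      pow_le_pow_left₀ (by positivity) hfin3 N
    have hfin5 : δ ≤ r^N/4 := hk2
    linarith
end
end

section
/- Let A be a unital C*-algebra, n ≥ 1, and φ : A → Mₙ a unital *-linear map. Let a, b ∈ A, λ ∈ ℂ and ε > 0 be such that a*a + (b + λ1)*(b + λ1) = ‖a‖·1 in A, and suppose ‖φ(a*a) − φ(a)*φ(a)‖_{2,tr} < ε and ‖φ((b+λ1)*(b+λ1)) − φ(b+λ1)*φ(b+λ1)‖_{2,tr} < ε. Then ‖φ(a)‖_{2,tr}² ≤ ‖a‖ + 2ε. -/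
open scoped Matrix.Norms.L2Operator ComplexOrder
open Matrix Filter TopologicalSpace

noncomputable section

section AuxLemmas

private lemma trace_star_mul_self_re {n : ℕ} (α : MatC n) :
    (Matrix.trace (star α * α)).re = ∑ i, ∑ j, Complex.normSq (α j i) := by
  have : star α = αᴴ := rfl
  simp [Matrix.trace, Matrix.mul_apply, Matrix.diag, this, Matrix.conjTranspose_apply,
    Complex.re_sum, Complex.mul_conj', Complex.normSq_apply]

private lemma trace_star_mul_self_re_nonneg {n : ℕ} (α : MatC n) :
    0 ≤ (Matrix.trace (star α * α)).re := by
  rw [trace_star_mul_self_re]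
  exact Finset.sum_nonneg fun i _ => Finset.sum_nonneg fun j _ => Complex.normSq_nonneg _

private lemma abs_trace_sq_le {n : ℕ} (δ : MatC n) :
    ‖Matrix.trace δ‖ ^ 2 ≤ n * (Matrix.trace (star δ * δ)).re := by
  calc ‖Matrix.trace δ‖ ^ 2 ≤ (∑ i, ‖δ i i‖) ^ 2 := by
        have h := norm_sum_le Finset.univ (fun i => δ i i)
        have h0 : (0:ℝ) ≤ ‖Matrix.trace δ‖ := norm_nonneg _
        unfold Matrix.trace Matrix.diag at *
        nlinarith [h]
    _ ≤ ((Finset.univ : Finset (Fin n)).card : ℝ) * ∑ i, ‖δ i i‖ ^ 2 := by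
        exact_mod_cast sq_sum_le_card_mul_sum_sq
          (s := (Finset.univ : Finset (Fin n))) (f := fun i => ‖δ i i‖)
    _ ≤ n * (Matrix.trace (star δ * δ)).re := by
        rw [trace_star_mul_self_re]
        simp only [Finset.card_univ, Fintype.card_fin]
        gcongr with i _
        calc ‖δ i i‖ ^ 2 = Complex.normSq (δ i i) := Complex.sq_norm _
          _ ≤ ∑ j, Complex.normSq (δ j i) :=
              Finset.single_le_sum (f := fun j => Complex.normSq (δ j i))
                (fun j _ => Complex.normSq_nonneg _) (Finset.mem_univ i)

private lemma trn_re_div {n : ℕ} (α : MatC n) : (trn α).re = (Matrix.trace α).re / n := by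
  rw [trn]; exact_mod_cast Complex.div_ofReal_re _ _

private lemma abs_trn_le_l2tr {n : ℕ} (hn : 0 < n) (δ : MatC n) :
    ‖trn δ‖ ≤ l2tr δ := by
  have hn' : (0:ℝ) < n := by exact_mod_cast hn
  have hT := trace_star_mul_self_re_nonneg δ
  rw [trn, l2tr, trn_re_div, norm_div]
  have hcabs : ‖((n:ℂ))‖ = n := by simp
  rw [hcabs, Real.le_sqrt (by positivity)]
  rw [div_pow, div_le_div_iff₀ (by positivity) hn']
  nlinarith [abs_trace_sq_le δ]
  exact div_nonneg hT hn'.le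

private lemma trn_add {n : ℕ} (x y : MatC n) : trn (x + y) = trn x + trn y := by
  simp [trn, Matrix.trace_add, add_div]

private lemma trn_sub {n : ℕ} (x y : MatC n) : trn (x - y) = trn x - trn y := by
  simp [trn, Matrix.trace_sub, sub_div]

private lemma trn_smul {n : ℕ} (s : ℂ) (x : MatC n) : trn (s • x) = s * trn x := by
  simp [trn, Matrix.trace_smul, smul_eq_mul, mul_div_assoc]

private lemma trn_one {n : ℕ} (hn : 0 < n) : trn (1 : MatC n) = 1 := by
  rw [trn, Matrix.trace_one, Fintype.card_fin]
  exact div_self (by exact_mod_cast hn.ne')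

private lemma trn_star_mul_self_re_nonneg {n : ℕ} (α : MatC n) :
    0 ≤ (trn (star α * α)).re := by
  rw [trn_re_div]
  exact div_nonneg (trace_star_mul_self_re_nonneg α) (Nat.cast_nonneg n)

end AuxLemmas

/-- Key norm estimate: if `φ : A → Mₙ` is a unital `*`-linear map, `a*a + (b+λ1)*(b+λ1) = ‖a‖·1`
in `A`, and `φ` is `ε`-almost multiplicative (in `‖·‖_{2,tr}`) on the relevant products, then
`‖φ(a)‖_{2,tr}² ≤ ‖a‖ + 2ε`. -/
theorem l2tr_sq_le_of_almost_multiplicative (A : Type*) [CStarAlgebra A]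
    (n : ℕ) (hn : 0 < n) (φ : A → MatC n) (hφ : IsStarLinear φ) (hφ1 : φ 1 = 1)
    (a b : A) (l : ℂ) (ε : ℝ) (hε : 0 < ε)
    (hsum : star a * a + star (b + l • (1 : A)) * (b + l • (1 : A)) = (‖a‖ : ℂ) • (1 : A))
    (h1 : l2tr (φ (star a * a) - star (φ a) * φ a) < ε)
    (h2 : l2tr (φ (star (b + l • (1 : A)) * (b + l • (1 : A)))
        - star (φ (b + l • (1 : A))) * φ (b + l • (1 : A))) < ε) :
    l2tr (φ a) ^ 2 ≤ ‖a‖ + 2 * ε := by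
  obtain ⟨hlin, -⟩ := hφ
  set c := b + l • (1 : A) with hc
  set α := φ a
  set γ := φ c
  set δ1 := φ (star a * a) - star α * α with hδ1
  set δ2 := φ (star c * c) - star γ * γ with hδ2
  have hφsum : φ (star a * a) + φ (star c * c) = (‖a‖ : ℂ) • (1 : MatC n) := by
    rw [← hlin.map_add, hsum, hlin.map_smul, hφ1]
  have key : star α * α + star γ * γ = (‖a‖:ℂ) • (1 : MatC n) - δ1 - δ2 := by
    rw [hδ1, hδ2, ← hφsum]; abel
  have keyt : trn (star α * α) + trn (star γ * γ) = (‖a‖:ℂ) - trn δ1 - trn δ2 := by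
    have := congrArg trn key
    rwa [trn_add, trn_sub, trn_sub, trn_smul, trn_one hn, mul_one] at this
  have keyre : (trn (star α * α)).re + (trn (star γ * γ)).re
      = ‖a‖ - (trn δ1).re - (trn δ2).re := by
    have := congrArg Complex.re keyt
    simpa using this
  have hd1 : -(trn δ1).re ≤ l2tr δ1 :=
    le_trans (neg_le_abs _) (le_trans (Complex.abs_re_le_norm _) (abs_trn_le_l2tr hn δ1))
  have hd2 : -(trn δ2).re ≤ l2tr δ2 :=
    le_trans (neg_le_abs _) (le_trans (Complex.abs_re_le_norm _) (abs_trn_le_l2tr hn δ2))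
  have hγ : 0 ≤ (trn (star γ * γ)).re := trn_star_mul_self_re_nonneg γ
  have hsq : l2tr α ^ 2 = (trn (star α * α)).re :=
    Real.sq_sqrt (trn_star_mul_self_re_nonneg α)
  rw [hsq]
  linarith
end
end
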